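/- For coprime positive integers a, b and 0 ≤ i ≤ a, the large and small rational Schröder numbers satisfy Sch(a,b,i) = sch(a,b,i) + sch(a,b,i−1), with sch(a,b,−1)=0. -/
import Mathlib


/-- Steps of a (Schröder) lattice path: north, east, diagonal. -/
inductive Step : Type
  | N | E | D
deriving DecidableEq, Repr

/-- Total horizontal displacement of a path. -/
def eLen (p : List Step) : ℕ := p.count Step.E + p.count Step.D

/-- Total vertical displacement of a path. -/
def nLen (p : List Step) : ℕ := p.count Step.N + p.count Step.D

/-- A lattice path uses only `N` and `E` steps. -/
def IsLatticePath (ν : List Step) : Prop := Step.D ∉ ν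

/-- `colVal p x` is twice the starting height of the step of `p` crossing the vertical
strip between abscissas `x` and `x+1`, plus `1` if that step is diagonal.  Comparing these
values columnwise is equivalent to comparing the heights of the paths over each strip. -/
def colVal : List Step → ℕ → ℕ
  | [], _ => 0
  | Step.N :: p, x => colVal p x + 2
  | Step.E :: _, 0 => 0
  | Step.E :: p, x+1 => colVal p x
  | Step.D :: _, 0 => 1
  | Step.D :: p, x+1 => colVal p x + 2

/-- `π` stays weakly above `ρ` (same endpoints intended). -/
def WeaklyAbove (π ρ : List Step) : Prop := ∀ x, colVal ρ x ≤ colVal π x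

/-- Replace every peak (consecutive `NE`) of a path by a diagonal step; applied to `ν`
this gives the path `μ` of the large ν-Schröder path definition. -/
def cutPeaks : List Step → List Step
  | [] => []
  | Step.N :: Step.E :: p => Step.D :: cutPeaks p
  | s :: p => s :: cutPeaks p

/-- A ν-Dyck path: an `N,E` path with the same endpoints as `ν` staying weakly above `ν`. -/
def IsNuDyck (ν π : List Step) : Prop :=
  Step.D ∉ π ∧ eLen π = eLen ν ∧ nLen π = nLen ν ∧ WeaklyAbove π ν

/-- A (small) ν-Schröder path: an `N,E,D` path with the same endpoints as `ν` staying weakly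
above `ν` (this automatically forbids diagonal steps on the ν-diagonal). -/
def IsSmallSchroder (ν π : List Step) : Prop :=
  eLen π = eLen ν ∧ nLen π = nLen ν ∧ WeaklyAbove π ν

/-- A large ν-Schröder path: an `N,E,D` path with the same endpoints as `ν` staying weakly
above the path obtained from `ν` by replacing each peak by a diagonal step. -/
def IsLargeSchroder (ν π : List Step) : Prop :=
  eLen π = eLen ν ∧ nLen π = nLen ν ∧ WeaklyAbove π (cutPeaks ν)

/-- Number of peaks (consecutive `NE` pairs). -/
def peaks (p : List Step) : ℕ := (p.zip p.tail).count (Step.N, Step.E)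

/-- Number of valleys (consecutive `EN` pairs). -/
def valleys (p : List Step) : ℕ := (p.zip p.tail).count (Step.E, Step.N)

/-- Lattice points at which valleys of a path occur (starting the path at `(x,y)`). -/
def valleyPts : List Step → ℕ → ℕ → List (ℕ × ℕ)
  | [], _, _ => []
  | Step.E :: p, x, y =>
      (if p.head? = some Step.N then [(x+1, y)] else []) ++ valleyPts p (x+1) y
  | Step.N :: p, x, y => valleyPts p x (y+1)
  | Step.D :: p, x, y => valleyPts p (x+1) (y+1)

/-- Lattice points at which high peaks (peaks strictly above `ν`) of a path occur. -/
def highPeakPts (ν : List Step) : List Step → ℕ → ℕ → List (ℕ × ℕ)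
  | [], _, _ => []
  | Step.N :: p, x, y =>
      (if p.head? = some Step.E ∧ colVal ν x < 2*(y+1) then [(x, y+1)] else []) ++
        highPeakPts ν p x (y+1)
  | Step.E :: p, x, y => highPeakPts ν p (x+1) y
  | Step.D :: p, x, y => highPeakPts ν p (x+1) (y+1)

/-- Number of high peaks of `π` relative to `ν`. -/
def highPeaks (ν π : List Step) : ℕ := (highPeakPts ν π 0 0).length

/-- j-th ν-Narayana number: number of ν-Dyck paths with exactly `j` valleys. -/
noncomputable def Nar (ν : List Step) (j : ℕ) : ℕ :=
  Nat.card {π : List Step // IsNuDyck ν π ∧ valleys π = j}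

/-- Number of small ν-Schröder paths with exactly `i` diagonal steps. -/
noncomputable def schNum (ν : List Step) (i : ℕ) : ℕ :=
  Nat.card {π : List Step // IsSmallSchroder ν π ∧ π.count Step.D = i}

/-- `lowH ν x` is the lowest height of a point of `ν` at abscissa `x`. -/
def lowH : List Step → ℕ → ℕ
  | _, 0 => 0
  | [], _+1 => 0
  | Step.N :: p, x+1 => lowH p (x+1) + 1
  | Step.E :: p, x+1 => lowH p x
  | Step.D :: p, x+1 => lowH p x + 1

/-- The lowest lattice path from `(0,0)` to `(b,a)` weakly above the line segment
from `(0,0)` to `(b,a)`. -/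
def nuAB (a b : ℕ) : List Step :=
  (List.range b).flatMap (fun x =>
    List.replicate (((x+1)*a + b - 1)/b - (x*a + b - 1)/b) Step.N ++ [Step.E])

/-- Number of large rational `(a,b)`-Schröder paths with `i` diagonal steps. -/
noncomputable def largeCount (a b i : ℕ) : ℕ :=
  Nat.card {π : List Step // IsLargeSchroder (nuAB a b) π ∧ π.count Step.D = i}

/-- Number of small rational `(a,b)`-Schröder paths with `i` diagonal steps. -/
noncomputable def smallCount (a b i : ℕ) : ℕ :=
  Nat.card {π : List Step // IsSmallSchroder (nuAB a b) π ∧ π.count Step.D = i}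

/-- Binomial coefficient with an integer lower entry (zero when negative). -/
def chooseZ (n : ℕ) (k : ℤ) : ℕ := if 0 ≤ k then n.choose k.toNat else 0

/-- The region weakly above `ν` in the rectangle `[0,b] × [0,a]`. -/
def InRegion (ν : List Step) (p : ℕ × ℕ) : Prop :=
  p.1 ≤ eLen ν ∧ p.2 ≤ nLen ν ∧ lowH ν p.1 ≤ p.2

/-- Two points of the region are ν-incompatible if one is strictly southwest of the other and
the rectangle they span lies in the region (equivalently its bottom-right corner does). -/
def Incompat (ν : List Step) (p q : ℕ × ℕ) : Prop :=
  ((p.1 < q.1 ∧ p.2 < q.2) ∨ (q.1 < p.1 ∧ q.2 < p.2)) ∧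
    InRegion ν (max p.1 q.1, min p.2 q.2)

/-- A ν-binary tree: a maximal set of pairwise ν-compatible points of the region. -/
def IsBinaryTree (ν : List Step) (T : Finset (ℕ × ℕ)) : Prop :=
  (∀ p ∈ T, InRegion ν p) ∧ (∀ p ∈ T, ∀ q ∈ T, ¬ Incompat ν p q) ∧
    ∀ r, InRegion ν r → (∀ p ∈ T, ¬ Incompat ν r p) → r ∈ T

/-- A ν-Schröder tree: pairwise ν-compatible points of the region containing the root
`(0,a)` and meeting every row and every column. -/
def IsSchroderTree (ν : List Step) (T : Finset (ℕ × ℕ)) : Prop :=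
  (∀ p ∈ T, InRegion ν p) ∧ (∀ p ∈ T, ∀ q ∈ T, ¬ Incompat ν p q) ∧
    (0, nLen ν) ∈ T ∧ (∀ y ≤ nLen ν, ∃ p ∈ T, p.2 = y) ∧ (∀ x ≤ eLen ν, ∃ p ∈ T, p.1 = x)

/-- One contraction step: delete a node, provided the result is still a ν-Schröder tree. -/
def ContractStep (ν : List Step) (T T' : Finset (ℕ × ℕ)) : Prop :=
  ∃ q ∈ T, T' = T.erase q ∧ IsSchroderTree ν T'

/-- `p` is a leaf of the (plane tree associated to the) node set `T`: no node strictly below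
it in its column and none strictly to its right in its row. -/
def IsLeafIn (T : Finset (ℕ × ℕ)) (p : ℕ × ℕ) : Prop :=
  (∀ q ∈ T, ¬(q.1 = p.1 ∧ q.2 < p.2)) ∧ (∀ q ∈ T, ¬(q.2 = p.2 ∧ p.1 < q.1))

/-- Starting points of vertical runs and ending points of horizontal runs of `ν`. -/
def leafPts (ν : List Step) : Finset (ℕ × ℕ) :=
  (valleyPts ν 0 0).toFinset ∪ (if ν.head? = some Step.N then {((0 : ℕ), (0 : ℕ))} else ∅) ∪
    (if ν.getLast? = some Step.E then {(eLen ν, nLen ν)} else ∅)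

/-- `horizNu ν x y`: maximal number of east steps that can be placed starting at `(x,y)`
before crossing `ν` (staying within the bounding rectangle). -/
def horizNu (ν : List Step) (x y : ℕ) : ℕ :=
  ((Finset.Icc 1 (eLen ν - x)).filter (fun k => lowH ν (x + k) ≤ y)).card

/-- No `N` step of the given path (started at `(x,y)`) has initial point with
`horizNu`-value `h`. -/
def noNAt (ν : List Step) (h : ℕ) : List Step → ℕ → ℕ → Prop
  | [], _, _ => True
  | Step.N :: p, x, y => horizNu ν x y ≠ h ∧ noNAt ν h p x (y+1)
  | Step.E :: p, x, y => noNAt ν h p (x+1) y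
  | Step.D :: p, x, y => noNAt ν h p (x+1) (y+1)

/-- Right contraction: replace a consecutive `EN` pair (a valley) by a `D` step. -/
def RightC (μ lam : List Step) : Prop :=
  ∃ p q, μ = p ++ Step.E :: Step.N :: q ∧ lam = p ++ Step.D :: q

/-- Left contraction: delete an `E` step together with the most recent preceding `N` step
whose initial point has the same `horizNu` statistic as the initial point of the `E` step,
shift the intermediate subpath, and place a `D` step at the initial point of the `N` step. -/
def LeftC (ν μ lam : List Step) : Prop :=
  ∃ p m q, μ = p ++ Step.N :: (m ++ Step.E :: q) ∧ lam = p ++ Step.D :: (m ++ q) ∧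
    horizNu ν (eLen p) (nLen p)
      = horizNu ν (eLen (p ++ Step.N :: m)) (nLen (p ++ Step.N :: m)) ∧
    noNAt ν (horizNu ν (eLen (p ++ Step.N :: m)) (nLen (p ++ Step.N :: m)))
      m (eLen p) (nLen p + 1)

/-- Diagonal contraction: delete an `E` step ending at the initial point `r` of a `D` step,
together with the most recent preceding `N` step whose initial point `s` satisfies
`horizNu s = horizNu r`, shift the intermediate subpath, and place a `D` step at `s`. -/
def DiagC (ν μ lam : List Step) : Prop :=
  ∃ p m q, μ = p ++ Step.N :: (m ++ Step.E :: Step.D :: q) ∧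
    lam = p ++ Step.D :: (m ++ Step.D :: q) ∧
    horizNu ν (eLen p) (nLen p)
      = horizNu ν (eLen (p ++ Step.N :: m) + 1) (nLen (p ++ Step.N :: m)) ∧
    noNAt ν (horizNu ν (eLen (p ++ Step.N :: m) + 1) (nLen (p ++ Step.N :: m)))
      m (eLen p) (nLen p + 1)

/-- Cover relation of the contraction poset of ν-Schröder paths. -/
def Covers (ν μ lam : List Step) : Prop :=
  IsSmallSchroder ν μ ∧ IsSmallSchroder ν lam ∧
    (RightC μ lam ∨ LeftC ν μ lam ∨ DiagC ν μ lam)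

/-- The Morse matching: `σ` (having a `D` step preceded by no valley) is matched with the
path `π` obtained by replacing the first such `D` step by `EN`. -/
def MorseM (ν : List Step) : Set (List Step × List Step) :=
  { z | ∃ p q, Step.D ∉ p ∧ valleys p = 0 ∧
      z.2 = p ++ Step.D :: q ∧ z.1 = p ++ Step.E :: Step.N :: q ∧ IsSmallSchroder ν z.2 }

/-- Twice the area between a small ν-Schröder path and `ν`. -/
def area2 (ν π : List Step) : ℕ :=
  ∑ x ∈ Finset.range (eLen ν), (colVal π x - colVal ν x)

/-- An `(I,J̄)`-forest: increasing, non-crossing arcs. -/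
def IsIJForest (I J : Finset ℕ) (F : Finset (ℕ × ℕ)) : Prop :=
  (∀ a ∈ F, a.1 ∈ I ∧ a.2 ∈ J ∧ a.1 < a.2) ∧
    (∀ a ∈ F, ∀ a' ∈ F, ¬(a.1 < a'.1 ∧ a'.1 < a.2 ∧ a.2 < a'.2))

/-- A covering `(I,J̄)`-forest: contains the arc `(1,n)` and has no isolated node. -/
def IsCoveringForest (n : ℕ) (I J : Finset ℕ) (F : Finset (ℕ × ℕ)) : Prop :=
  IsIJForest I J F ∧ (1, n) ∈ F ∧
    (∀ i ∈ I, ∃ a ∈ F, a.1 = i) ∧ (∀ j ∈ J, ∃ a ∈ F, a.2 = j)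

/-- The lattice path read off from the interleaving of `I` and `J̄` (elements `2,…,n-1`,
`E` for elements of `I`, `N` for the others). -/
def nuOf (n : ℕ) (I : Finset ℕ) : List Step :=
  (List.range' 2 (n - 2)).map (fun k => if k ∈ I then Step.E else Step.N)

namespace Sch9

@[simp] lemma eLen_nil : eLen [] = 0 := rfl
@[simp] lemma eLen_consN (p : List Step) : eLen (Step.N :: p) = eLen p := by
  simp [eLen, List.count_cons]
@[simp] lemma eLen_consE (p : List Step) : eLen (Step.E :: p) = eLen p + 1 := by
  simp [eLen, List.count_cons]; omega
@[simp] lemma eLen_consD (p : List Step) : eLen (Step.D :: p) = eLen p + 1 := by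
  simp [eLen, List.count_cons]; omega
@[simp] lemma eLen_append (p q : List Step) : eLen (p ++ q) = eLen p + eLen q := by
  simp [eLen, List.count_append]; omega

@[simp] lemma nLen_nil : nLen [] = 0 := rfl
@[simp] lemma nLen_consN (p : List Step) : nLen (Step.N :: p) = nLen p + 1 := by
  simp [nLen, List.count_cons]; omega
@[simp] lemma nLen_consE (p : List Step) : nLen (Step.E :: p) = nLen p := by
  simp [nLen, List.count_cons]
@[simp] lemma nLen_consD (p : List Step) : nLen (Step.D :: p) = nLen p + 1 := by
  simp [nLen, List.count_cons]; omega
@[simp] lemma nLen_append (p q : List Step) : nLen (p ++ q) = nLen p + nLen q := by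
  simp [nLen, List.count_append]; omega

@[simp] lemma colVal_nil (x : ℕ) : colVal [] x = 0 := rfl
@[simp] lemma colVal_N (p : List Step) (x : ℕ) : colVal (Step.N :: p) x = colVal p x + 2 := rfl
@[simp] lemma colVal_E_zero (p : List Step) : colVal (Step.E :: p) 0 = 0 := rfl
@[simp] lemma colVal_E_succ (p : List Step) (x : ℕ) :
    colVal (Step.E :: p) (x+1) = colVal p x := rfl
@[simp] lemma colVal_D_zero (p : List Step) : colVal (Step.D :: p) 0 = 1 := rfl
@[simp] lemma colVal_D_succ (p : List Step) (x : ℕ) :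
    colVal (Step.D :: p) (x+1) = colVal p x + 2 := rfl

lemma colVal_append_le {u : List Step} (v : List Step) {x : ℕ} (h : eLen u ≤ x) :
    colVal (u ++ v) x = 2 * nLen u + colVal v (x - eLen u) := by
  induction u generalizing x with
  | nil => simp
  | cons s t ih =>
    cases s with
    | N => simp [ih (by simpa using h)]; ring
    | E =>
      cases x with
      | zero => simp at h
      | succ y =>
        have h' : eLen t ≤ y := by simp at h; omega
        simp [List.cons_append, ih h', Nat.succ_sub_succ]
    | D =>
      cases x with
      | zero => simp at h
      | succ y =>
        have h' : eLen t ≤ y := by simp at h; omega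
        simp [List.cons_append, ih h', Nat.succ_sub_succ]
        ring

lemma colVal_append_lt {u : List Step} (v : List Step) {x : ℕ} (h : x < eLen u) :
    colVal (u ++ v) x = colVal u x := by
  induction u generalizing x with
  | nil => simp at h
  | cons s t ih =>
    cases s with
    | N => simp [ih (by simpa using h)]
    | E =>
      cases x with
      | zero => simp
      | succ y => simp at h ⊢; exact ih (by omega)
    | D =>
      cases x with
      | zero => simp
      | succ y => simp at h ⊢; exact ih (by omega)

lemma colVal_eLen_le {p : List Step} {x : ℕ} (h : eLen p ≤ x) :
    colVal p x = 2 * nLen p := by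
  have := colVal_append_le (u := p) ([]) h
  simpa using this

lemma colVal_le_succ (p : List Step) (x : ℕ) : colVal p x ≤ colVal p (x+1) := by
  induction p generalizing x with
  | nil => simp
  | cons s t ih =>
    cases s with
    | N => simpa using ih x
    | E => cases x with
      | zero => simp
      | succ y => simpa using ih y
    | D => cases x with
      | zero => simp only [colVal_D_zero, colVal_D_succ]; omega
      | succ y => simpa using ih y

lemma colVal_mono (p : List Step) {x y : ℕ} (h : x ≤ y) : colVal p x ≤ colVal p y := by
  induction y with
  | zero => simp at h; simp [h]
  | succ n ih =>
    rcases Nat.lt_or_ge x (n+1) with h' | h'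
    · exact le_trans (ih (by omega)) (colVal_le_succ p n)
    · have : x = n + 1 := by omega
      simp [this]

lemma colVal_lt_of_odd {p : List Step} {x : ℕ} (h : Odd (colVal p (x+1))) :
    colVal p x < colVal p (x+1) := by
  induction p generalizing x with
  | nil => simp at h
  | cons s t ih =>
    cases s with
    | N =>
      simp at h ⊢
      have : Odd (colVal t (x+1)) := by
        rcases h with ⟨k, hk⟩; exact ⟨k - 1, by omega⟩
      have := ih this; omega
    | E =>
      cases x with
      | zero =>
        simp at h ⊢
        rcases h with ⟨k, hk⟩; omega
      | succ y => simp at h ⊢; exact ih h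
    | D =>
      cases x with
      | zero => simp only [colVal_D_zero, colVal_D_succ]; omega
      | succ y =>
        simp at h ⊢
        have : Odd (colVal t (y+1)) := by rcases h with ⟨k, hk⟩; exact ⟨k - 1, by omega⟩
        have := ih this; omega

lemma even_colVal {p : List Step} (hD : Step.D ∉ p) (x : ℕ) : Even (colVal p x) := by
  induction p generalizing x with
  | nil => simp
  | cons s t ih =>
    have hs : s ≠ Step.D := by rintro rfl; exact hD (by simp)
    have ht : Step.D ∉ t := fun h => hD (by simp [h])
    cases s with
    | N => simpa using (ih ht x).add (even_two)
    | E => cases x with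
      | zero => simp
      | succ y => simpa using ih ht y
    | D => exact absurd rfl hs

end Sch9
namespace Sch9

@[simp] lemma cutPeaks_nil : cutPeaks [] = [] := rfl

lemma cutPeaks_cons_of {s : Step} {p : List Step}
    (hne : ∀ q, s = Step.N → p = Step.E :: q → False) :
    cutPeaks (s :: p) = s :: cutPeaks p := by
  cases s <;> rcases p with _ | ⟨t, q⟩ <;> first
    | rfl
    | (cases t
       · rfl
       · exact absurd rfl (fun h => hne q h rfl)
       · rfl)

@[simp] lemma eLen_cutPeaks (p : List Step) : eLen (cutPeaks p) = eLen p := by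
  induction p using cutPeaks.induct with
  | case1 => simp [cutPeaks]
  | case2 p ih => rw [show cutPeaks (Step.N :: Step.E :: p) = Step.D :: cutPeaks p from rfl]
                  simp [ih]
  | case3 s p hne ih => rw [cutPeaks_cons_of hne]; cases s <;> simp [ih]

@[simp] lemma nLen_cutPeaks (p : List Step) : nLen (cutPeaks p) = nLen p := by
  induction p using cutPeaks.induct with
  | case1 => simp [cutPeaks]
  | case2 p ih => rw [show cutPeaks (Step.N :: Step.E :: p) = Step.D :: cutPeaks p from rfl]
                  simp [ih]
  | case3 s p hne ih => rw [cutPeaks_cons_of hne]; cases s <;> simp [ih]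

lemma colVal_cutPeaks_le (p : List Step) (x : ℕ) : colVal (cutPeaks p) x ≤ colVal p x := by
  induction p using cutPeaks.induct generalizing x with
  | case1 => simp
  | case2 p ih =>
    rw [show cutPeaks (Step.N :: Step.E :: p) = Step.D :: cutPeaks p from rfl]
    cases x with
    | zero => simp
    | succ y => simp only [colVal_D_succ, colVal_N, colVal_E_succ]
                have := ih y; omega
  | case3 s p hne ih =>
    rw [cutPeaks_cons_of hne]
    cases s
    · simp only [colVal_N]; have := ih x; omega
    · cases x with
      | zero => simp
      | succ y => simpa using ih y
    · cases x with
      | zero => simp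
      | succ y => simp only [colVal_D_succ]; have := ih y; omega

lemma colVal_le_cutPeaks (p : List Step) (x : ℕ) :
    colVal p x ≤ colVal (cutPeaks p) x + 1 := by
  induction p using cutPeaks.induct generalizing x with
  | case1 => simp
  | case2 p ih =>
    rw [show cutPeaks (Step.N :: Step.E :: p) = Step.D :: cutPeaks p from rfl]
    cases x with
    | zero => simp
    | succ y => simp only [colVal_D_succ, colVal_N, colVal_E_succ]
                have := ih y; omega
  | case3 s p hne ih =>
    rw [cutPeaks_cons_of hne]
    cases s
    · simp only [colVal_N]; have := ih x; omega
    · cases x with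
      | zero => simp
      | succ y => simpa using ih y
    · cases x with
      | zero => simp
      | succ y => simp only [colVal_D_succ]; have := ih y; omega

/-- If a `D`-free path starts at height `≥ 1` over column 0 and has an east step,
then its first peak is cut:  `cutPeaks` is strictly lower over column `0`. -/
lemma cutPeaks_zero_lt {p : List Step} (hD : Step.D ∉ p) (he : 0 < eLen p)
    (h2 : 2 ≤ colVal p 0) : colVal (cutPeaks p) 0 < colVal p 0 := by
  induction p using cutPeaks.induct with
  | case1 => simp at h2
  | case2 p ih =>
    rw [show cutPeaks (Step.N :: Step.E :: p) = Step.D :: cutPeaks p from rfl]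
    simp
  | case3 s p hne ih =>
    rw [cutPeaks_cons_of hne]
    cases s
    · -- s = N ; p does not start with E
      have hD' : Step.D ∉ p := fun h => hD (by simp [h])
      have he' : 0 < eLen p := by simpa using he
      have h2' : 2 ≤ colVal p 0 := by
        -- p starts with N (not E since hne, not D since hD, nonempty since eLen > 0)
        rcases p with _ | ⟨t, q⟩
        · simp at he'
        · cases t
          · simp only [colVal_N]; omega
          · exact (hne q rfl rfl).elim
          · exact absurd (by simp : Step.D ∈ Step.D :: q) hD'
      have := ih hD' he' h2'
      simp only [colVal_N]; omega
    · simp at h2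
    · exact absurd (by simp : Step.D ∈ Step.D :: p) hD

/-- If a `D`-free path rises between columns `x` and `x+1` (within range), the east step
over column `x+1` is a peak, hence cut. -/
lemma cutPeaks_lt_of_rise {p : List Step} (hD : Step.D ∉ p) :
    ∀ x, x + 1 < eLen p → colVal p x < colVal p (x+1) →
      colVal (cutPeaks p) (x+1) < colVal p (x+1) := by
  induction p using cutPeaks.induct with
  | case1 => intro x hx; simp at hx
  | case2 p ih =>
    intro x hx hrise
    have hD' : Step.D ∉ p := fun h => hD (by simp [h])
    rw [show cutPeaks (Step.N :: Step.E :: p) = Step.D :: cutPeaks p from rfl]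
    cases x with
    | zero =>
      -- colVal p 0 ≥ 1, even, so ≥ 2 and apply cutPeaks_zero_lt
      simp only [colVal_N, colVal_E_succ, colVal_E_zero, colVal_D_succ] at hrise ⊢
      have he' : 0 < eLen p := by simp at hx; omega
      have h2 : 2 ≤ colVal p 0 := by
        have := even_colVal hD' 0
        rcases this with ⟨k, hk⟩; omega
      have := cutPeaks_zero_lt hD' he' h2
      omega
    | succ y =>
      simp only [colVal_N, colVal_E_succ, colVal_D_succ] at hrise ⊢
      have := ih hD' y (by simp at hx; omega) (by omega)
      omega
  | case3 s p hne ih =>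
    intro x hx hrise
    rw [cutPeaks_cons_of hne]
    cases s
    · have hD' : Step.D ∉ p := fun h => hD (by simp [h])
      simp only [colVal_N] at hrise ⊢
      have := ih hD' x (by simpa using hx) (by omega)
      omega
    · have hD' : Step.D ∉ p := fun h => hD (by simp [h])
      cases x with
      | zero =>
        simp only [colVal_E_zero, colVal_E_succ] at hrise ⊢
        have he' : 0 < eLen p := by simp at hx; omega
        have h2 : 2 ≤ colVal p 0 := by
          have := even_colVal hD' 0
          rcases this with ⟨k, hk⟩; omega
        exact cutPeaks_zero_lt hD' he' h2
      | succ y =>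
        simp only [colVal_E_succ] at hrise ⊢
        exact ih hD' y (by simp at hx; omega) hrise
    · exact absurd (by simp : Step.D ∈ Step.D :: p) hD

end Sch9
namespace Sch9

/-- Decompose a path at the step crossing column `x`. -/
lemma exists_split {p : List Step} {x : ℕ} (h : x < eLen p) :
    ∃ u c w, p = u ++ c :: w ∧ eLen u = x ∧ c ≠ Step.N ∧
      colVal p x = 2 * nLen u + (if c = Step.D then 1 else 0) := by
  induction p generalizing x with
  | nil => simp at h
  | cons s t ih =>
    cases s with
    | N =>
      obtain ⟨u, c, w, h1, h2, h3, h4⟩ := ih (by simpa using h)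
      exact ⟨Step.N :: u, c, w, by simp [h1], by simpa using h2, h3,
        by simp only [colVal_N, h4, nLen_consN]; ring⟩
    | E =>
      cases x with
      | zero => exact ⟨[], Step.E, t, rfl, rfl, by simp, by simp⟩
      | succ y =>
        obtain ⟨u, c, w, h1, h2, h3, h4⟩ := ih (x := y) (by simp at h; omega)
        exact ⟨Step.E :: u, c, w, by simp [h1], by simp [h2], h3, by simpa using h4⟩
    | D =>
      cases x with
      | zero => exact ⟨[], Step.D, t, rfl, rfl, by simp, by simp⟩
      | succ y =>
        obtain ⟨u, c, w, h1, h2, h3, h4⟩ := ih (x := y) (by simp at h; omega)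
        exact ⟨Step.D :: u, c, w, by simp [h1], by simp [h2], h3,
          by simp only [colVal_D_succ, h4, nLen_consD]; ring⟩

/-- Uniqueness of the decomposition at a given column. -/
lemma split_unique : ∀ {u u' : List Step} {c c' : Step} {w w' : List Step},
    u ++ c :: w = u' ++ c' :: w' → eLen u = eLen u' → c ≠ Step.N → c' ≠ Step.N →
    u = u' ∧ c = c' ∧ w = w' := by
  intro u
  induction u with
  | nil =>
    intro u' c c' w w' heq hel hc hc'
    rcases u' with _ | ⟨s, t⟩
    · simp_all
    · simp only [List.nil_append, List.cons_append, List.cons.injEq] at heq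
      obtain ⟨rfl, rfl⟩ := heq
      cases c
      · exact absurd rfl hc
      · simp at hel
      · simp at hel
  | cons s t ih =>
    intro u' c c' w w' heq hel hc hc'
    rcases u' with _ | ⟨s', t'⟩
    · simp only [List.nil_append, List.cons_append, List.cons.injEq] at heq
      obtain ⟨rfl, rfl⟩ := heq
      cases s
      · exact absurd rfl hc'
      · simp at hel
      · simp at hel
    · simp only [List.cons_append, List.cons.injEq] at heq
      obtain ⟨rfl, heq⟩ := heq
      have hel' : eLen t = eLen t' := by cases s <;> simp at hel <;> omega
      obtain ⟨rfl, rfl, rfl⟩ := ih heq hel' hc hc'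
      exact ⟨rfl, rfl, rfl⟩

lemma head_N_of_two_le {p : List Step} (h : 2 ≤ colVal p 0) :
    ∃ t, p = Step.N :: t := by
  rcases p with _ | ⟨s, t⟩
  · simp at h
  · cases s
    · exact ⟨t, rfl⟩
    · simp at h
    · simp at h

lemma length_eq_counts (l : List Step) :
    l.length = l.count Step.N + l.count Step.E + l.count Step.D := by
  induction l with
  | nil => simp
  | cons s t ih => cases s <;> simp [List.count_cons, ih] <;> omega

instance : Fintype Step :=
  ⟨⟨{Step.N, Step.E, Step.D}, by decide⟩, fun x => by cases x <;> decide⟩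

lemma finite_bounded (E A : ℕ) :
    {l : List Step | eLen l = E ∧ nLen l = A}.Finite := by
  apply (List.finite_length_le Step (E + A)).subset
  intro l ⟨h1, h2⟩
  have := length_eq_counts l
  simp only [Set.mem_setOf_eq]
  simp only [eLen] at h1
  simp only [nLen] at h2
  omega

end Sch9
namespace Sch9

lemma sp_lt (μ₁ μ₂ : List Step) {x : ℕ} (h : x < eLen μ₁) :
    colVal (Step.N :: (μ₁ ++ Step.E :: μ₂)) x = colVal (μ₁ ++ Step.D :: μ₂) x + 2 := by
  rw [colVal_N, colVal_append_lt _ h, colVal_append_lt _ h]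

lemma sp_eq_left (μ₁ μ₂ : List Step) :
    colVal (Step.N :: (μ₁ ++ Step.E :: μ₂)) (eLen μ₁) = 2 * nLen μ₁ + 2 := by
  rw [colVal_N, colVal_append_le _ le_rfl]; simp

lemma sp_eq_right (μ₁ μ₂ : List Step) :
    colVal (μ₁ ++ Step.D :: μ₂) (eLen μ₁) = 2 * nLen μ₁ + 1 := by
  rw [colVal_append_le _ le_rfl]; simp

lemma sp_gt (μ₁ μ₂ : List Step) {x : ℕ} (h : eLen μ₁ < x) :
    colVal (Step.N :: (μ₁ ++ Step.E :: μ₂)) x = colVal (μ₁ ++ Step.D :: μ₂) x := by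
  obtain ⟨y, hy⟩ : ∃ y, x - eLen μ₁ = y + 1 := ⟨x - eLen μ₁ - 1, by omega⟩
  rw [colVal_N, colVal_append_le _ h.le, colVal_append_le _ h.le, hy,
    colVal_E_succ, colVal_D_succ]
  ring

/-- The correspondence between a small path `σ` and the large path `π` obtained by the
peak/diagonal surgery at the first column where `σ` touches `ν`. -/
def Rel (ν σ π : List Step) : Prop :=
  ∃ μ₁ μ₂, σ = Step.N :: (μ₁ ++ Step.E :: μ₂) ∧ π = μ₁ ++ Step.D :: μ₂ ∧
    colVal σ (eLen μ₁) = colVal ν (eLen μ₁) ∧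
    (∀ x < eLen μ₁, colVal ν x < colVal σ x) ∧
    colVal π (eLen μ₁) < colVal ν (eLen μ₁) ∧
    (∀ x, eLen μ₁ < x → colVal ν x ≤ colVal π x)

lemma rel_unique_right {ν σ π π' : List Step} (h : Rel ν σ π) (h' : Rel ν σ π') :
    π = π' := by
  obtain ⟨μ₁, μ₂, hs, hp, c3, c4, c5, c6⟩ := h
  obtain ⟨μ₁', μ₂', hs', hp', c3', c4', c5', c6'⟩ := h'
  have heq : μ₁ ++ Step.E :: μ₂ = μ₁' ++ Step.E :: μ₂' := by
    injection hs.symm.trans hs'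
  have hel : eLen μ₁ = eLen μ₁' := by
    rcases Nat.lt_trichotomy (eLen μ₁) (eLen μ₁') with h | h | h
    · have := c4' _ h; omega
    · exact h
    · have := c4 _ h; omega
  obtain ⟨rfl, -, rfl⟩ := split_unique heq hel (by simp) (by simp)
  rw [hp, hp']

lemma rel_unique_left {ν σ σ' π : List Step} (h : Rel ν σ π) (h' : Rel ν σ' π) :
    σ = σ' := by
  obtain ⟨μ₁, μ₂, hs, hp, c3, c4, c5, c6⟩ := h
  obtain ⟨μ₁', μ₂', hs', hp', c3', c4', c5', c6'⟩ := h'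
  have heq : μ₁ ++ Step.D :: μ₂ = μ₁' ++ Step.D :: μ₂' := hp.symm.trans hp'
  have hel : eLen μ₁ = eLen μ₁' := by
    rcases Nat.lt_trichotomy (eLen μ₁) (eLen μ₁') with h | h | h
    · have := c6 _ h; omega
    · exact h
    · have := c6' _ h; omega
  obtain ⟨rfl, -, rfl⟩ := split_unique heq hel (by simp) (by simp)
  rw [hs, hs']

section Main

variable {ν : List Step} (hD : Step.D ∉ ν) (he : 0 < eLen ν)
  (h0 : 2 ≤ colVal ν 0) (hlast : colVal ν (eLen ν - 1) = 2 * nLen ν)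

include hD he h0 hlast in
lemma exists_rel_of_small {σ : List Step} (hσ : IsSmallSchroder ν σ) :
    ∃ π, Rel ν σ π ∧ IsLargeSchroder ν π ∧
      π.count Step.D = σ.count Step.D + 1 := by
  obtain ⟨hEσ, hAσ, hW⟩ := hσ
  set E := eLen ν with hE
  set A := nLen ν with hA
  -- the touch set is nonempty
  have hT1 : colVal σ (E - 1) = colVal ν (E - 1) := by
    obtain ⟨u, c, w, hu1, hu2, hu3, hu4⟩ :=
      exists_split (p := σ) (x := E - 1) (by omega)
    have hnu : nLen u + nLen (c :: w) = A := by
      rw [← hAσ, hu1]; simp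
    have hWl := hW (E - 1)
    cases c with
    | N => exact absurd rfl hu3
    | E => simp only [nLen_consE] at hnu
           have : nLen u ≤ A := by omega
           simp at hu4; omega
    | D => simp only [nLen_consD] at hnu
           simp at hu4; omega
  set T := (Finset.range E).filter (fun x => colVal σ x = colVal ν x) with hTdef
  have hTne : T.Nonempty := ⟨E - 1, by simp [hTdef]; exact ⟨by omega, hT1⟩⟩
  set x₀ := T.min' hTne with hx₀def
  have hx₀T := T.min'_mem hTne
  have hx₀lt : x₀ < E := by simp [hTdef] at hx₀T; exact hx₀T.1
  have htouch : colVal σ x₀ = colVal ν x₀ := by simp [hTdef] at hx₀T; exact hx₀T.2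
  have hstrict : ∀ x < x₀, colVal ν x < colVal σ x := by
    intro x hx
    rcases lt_or_eq_of_le (hW x) with h | h
    · exact h
    · exact absurd (T.min'_le x (by simp [hTdef]; exact ⟨by omega, h.symm⟩)) (by omega)
  -- split σ at x₀
  obtain ⟨u, c, w, hu1, hu2, hu3, hu4⟩ := exists_split (p := σ) (x := x₀) (by omega)
  have hceq : c = Step.E := by
    cases c with
    | N => exact absurd rfl hu3
    | E => rfl
    | D =>
      obtain ⟨k, hk⟩ := even_colVal hD x₀
      simp at hu4; omega
  subst hceq
  obtain ⟨σt, hσt⟩ := head_N_of_two_le (p := σ) (le_trans h0 (hW 0))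
  obtain ⟨μ₁, rfl⟩ : ∃ μ₁, u = Step.N :: μ₁ := by
    rcases u with _ | ⟨s, t⟩
    · rw [hσt] at hu1; simp at hu1
    · rw [hσt] at hu1; simp at hu1; exact ⟨t, by rw [hu1.1]⟩
  have heμ : eLen μ₁ = x₀ := by simpa using hu2
  have hσform : σ = Step.N :: (μ₁ ++ Step.E :: w) := by simpa using hu1
  refine ⟨μ₁ ++ Step.D :: w, ⟨μ₁, w, hσform, rfl, by rw [heμ]; exact htouch,
    by rw [heμ]; exact hstrict, ?_, ?_⟩, ⟨?_, ?_, ?_⟩, ?_⟩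
  · -- π is strictly below ν at x₀
    have h1 := sp_eq_right μ₁ w
    have h2 := sp_eq_left μ₁ w
    rw [← hσform, heμ, htouch] at h2
    rw [heμ] at h1 ⊢
    omega
  · -- π agrees with σ after x₀, σ is weakly above ν
    intro x hx
    rw [← sp_gt μ₁ w hx, ← hσform]
    exact hW x
  · rw [hσform] at hEσ; simp at hEσ ⊢; omega
  · rw [hσform] at hAσ; simp at hAσ ⊢; omega
  · -- weakly above cutPeaks ν
    intro x
    have hcutle := colVal_cutPeaks_le ν x
    rcases Nat.lt_trichotomy x x₀ with hlt | rfl | hgt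
    · -- strictly before the first touch
      rw [← heμ] at hlt
      have hspx := sp_lt μ₁ w hlt
      rw [← hσform] at hspx
      rw [heμ] at hlt
      have hst := hstrict x hlt
      by_cases hpk : colVal (cutPeaks ν) x < colVal ν x
      · omega
      · -- not a peak column: σ must be at least 2 above ν there
        have hxeq : colVal (cutPeaks ν) x = colVal ν x := by omega
        have hge2 : colVal ν x + 2 ≤ colVal σ x := by
          rcases Nat.lt_or_ge (colVal ν x + 1) (colVal σ x) with h | h
          · omega
          have hσx : colVal σ x = colVal ν x + 1 := by omega
          exfalso
          cases x with
          | zero => exact absurd (cutPeaks_zero_lt hD he h0) (by omega)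
          | succ y =>
            have hrise : ¬ colVal ν y < colVal ν (y+1) := fun hr =>
              absurd (cutPeaks_lt_of_rise hD y (by omega) hr) (by omega)
            have hνeq : colVal ν y = colVal ν (y+1) :=
              le_antisymm (colVal_le_succ ν y) (by omega)
            have hodd : Odd (colVal σ (y+1)) := by
              obtain ⟨k, hk⟩ := even_colVal hD (y+1)
              exact ⟨k, by omega⟩
            have := colVal_lt_of_odd hodd
            have := hstrict y (by omega)
            omega
        omega
    · -- at the touch column: it is a peak
      have hpk : colVal (cutPeaks ν) x₀ < colVal ν x₀ := by
        rcases Nat.eq_zero_or_pos x₀ with hz | hpos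
        · rw [hz]; exact cutPeaks_zero_lt hD he h0
        · obtain ⟨y, hy⟩ : ∃ y, x₀ = y + 1 := ⟨x₀ - 1, by omega⟩
          have hrise : colVal ν y < colVal ν (y+1) := by
            by_contra hcon
            push_neg at hcon
            have h1 := colVal_le_succ σ y
            have h2 := hstrict y (by omega)
            have ht := htouch
            rw [hy] at ht
            omega
          rw [hy]
          exact cutPeaks_lt_of_rise hD y (by rw [← hy]; omega) hrise
      have h1 := sp_eq_right μ₁ w
      have h2 := sp_eq_left μ₁ w
      rw [← hσform, heμ, htouch] at h2
      rw [heμ] at h1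
      omega
    · rw [← heμ] at hgt
      rw [← sp_gt μ₁ w hgt, ← hσform]
      exact le_trans hcutle (hW x)
  · rw [hσform]; simp; omega

include hD he h0 in
lemma exists_rel_of_large {π : List Step} (hπ : IsLargeSchroder ν π)
    (hns : ¬ WeaklyAbove π ν) :
    ∃ σ, Rel ν σ π ∧ IsSmallSchroder ν σ ∧
      π.count Step.D = σ.count Step.D + 1 := by
  obtain ⟨hEπ, hAπ, hWc⟩ := hπ
  set E := eLen ν with hE
  set A := nLen ν with hA
  have hbadex : ∃ x, colVal π x < colVal ν x := by
    by_contra hc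
    push_neg at hc
    exact hns (fun x => hc x)
  set B := (Finset.range E).filter (fun x => colVal π x < colVal ν x) with hBdef
  have hBne : B.Nonempty := by
    obtain ⟨x, hx⟩ := hbadex
    have hxE : x < E := by
      by_contra hc
      rw [colVal_eLen_le (p := π) (by omega), colVal_eLen_le (p := ν) (by omega),
        hAπ] at hx
      omega
    exact ⟨x, Finset.mem_filter.2 ⟨Finset.mem_range.2 hxE, hx⟩⟩
  set x₁ := B.max' hBne with hx₁def
  have hx₁B := Finset.mem_filter.1 (B.max'_mem hBne)
  have hx₁lt : x₁ < E := Finset.mem_range.1 hx₁B.1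
  have hbad : colVal π x₁ < colVal ν x₁ := hx₁B.2
  have hbad1 : colVal π x₁ + 1 = colVal ν x₁ := by
    have h1 := colVal_le_cutPeaks ν x₁
    have h2 := hWc x₁
    omega
  have hafter : ∀ x, x₁ < x → colVal ν x ≤ colVal π x := by
    intro x hx
    rcases Nat.lt_or_ge x E with hxE | hxE
    · by_contra hc
      exact absurd (B.le_max' x (Finset.mem_filter.2 ⟨Finset.mem_range.2 hxE, by omega⟩))
        (by omega)
    · rw [colVal_eLen_le (p := π) (by omega), colVal_eLen_le (p := ν) (by omega), hAπ]
  obtain ⟨μ₁, c, w, hu1, hu2, hu3, hu4⟩ := exists_split (p := π) (x := x₁) (by omega)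
  have hceq : c = Step.D := by
    cases c with
    | N => exact absurd rfl hu3
    | E =>
      obtain ⟨k, hk⟩ := even_colVal hD x₁
      simp at hu4; omega
    | D => rfl
  subst hceq
  set σ := Step.N :: (μ₁ ++ Step.E :: w) with hσdef
  have hWσ : WeaklyAbove σ ν := by
    intro x
    rcases Nat.lt_trichotomy x x₁ with hlt | rfl | hgt
    · rw [← hu2] at hlt
      rw [hσdef, sp_lt μ₁ w hlt, ← hu1]
      rw [hu2] at hlt
      have := colVal_le_cutPeaks ν x
      have := hWc x
      omega
    · rw [hσdef, ← hu2, sp_eq_left]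
      rw [hu1, ← hu2, sp_eq_right] at hbad1
      omega
    · rw [← hu2] at hgt
      rw [hσdef, sp_gt μ₁ w hgt, ← hu1]
      rw [hu2] at hgt
      exact hafter x hgt
  refine ⟨σ, ⟨μ₁, w, rfl, hu1, ?_, ?_, ?_, by rw [hu2]; exact hafter⟩,
    ⟨?_, ?_, hWσ⟩, ?_⟩
  · have h2 := sp_eq_left μ₁ w
    rw [← hσdef] at h2
    rw [hu1, ← hu2, sp_eq_right] at hbad1
    omega
  · intro x hx
    have h1 : x < eLen μ₁ := hx
    rw [hσdef, sp_lt μ₁ w h1, ← hu1]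
    have := colVal_le_cutPeaks ν x
    have := hWc x
    omega
  · rw [hu2]; exact hbad
  · rw [hσdef]; rw [hu1] at hEπ; simp at hEπ ⊢; omega
  · rw [hσdef]; rw [hu1] at hAπ; simp at hAπ ⊢; omega
  · rw [hσdef, hu1]; simp; omega

end Main

end Sch9
namespace Sch9

lemma small_is_large {ν π : List Step} (h : IsSmallSchroder ν π) :
    IsLargeSchroder ν π :=
  ⟨h.1, h.2.1, fun x => le_trans (colVal_cutPeaks_le ν x) (h.2.2 x)⟩

lemma not_weaklyAbove_of_not_small {ν π : List Step} (hL : IsLargeSchroder ν π)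
    (hns : ¬ IsSmallSchroder ν π) : ¬ WeaklyAbove π ν :=
  fun hW => hns ⟨hL.1, hL.2.1, hW⟩

theorem count_eq {ν : List Step} (hD : Step.D ∉ ν) (he : 0 < eLen ν)
    (h0 : 2 ≤ colVal ν 0) (hlast : colVal ν (eLen ν - 1) = 2 * nLen ν) (i : ℕ) :
    Nat.card {π : List Step // IsLargeSchroder ν π ∧ π.count Step.D = i}
      = Nat.card {π : List Step // IsSmallSchroder ν π ∧ π.count Step.D = i}
        + (if i = 0 then 0
            else Nat.card {π : List Step //
              IsSmallSchroder ν π ∧ π.count Step.D = i - 1}) := by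
  classical
  have hfinL : Finite {π : List Step // IsLargeSchroder ν π ∧ π.count Step.D = i} := by
    apply Set.Finite.to_subtype
    apply (finite_bounded (eLen ν) (nLen ν)).subset
    rintro π ⟨⟨h1, h2, -⟩, -⟩
    exact ⟨h1, h2⟩
  have hfinS : ∀ j, Finite {π : List Step // IsSmallSchroder ν π ∧ π.count Step.D = j} := by
    intro j
    apply Set.Finite.to_subtype
    apply (finite_bounded (eLen ν) (nLen ν)).subset
    rintro π ⟨⟨h1, h2, -⟩, -⟩
    exact ⟨h1, h2⟩
  rcases Nat.eq_zero_or_pos i with rfl | hi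
  · simp only [if_pos rfl, Nat.add_zero]
    apply Nat.card_congr
    apply Equiv.subtypeEquivRight
    intro π
    constructor
    · rintro ⟨hL, hc⟩
      refine ⟨⟨hL.1, hL.2.1, fun x => ?_⟩, hc⟩
      have hDπ : Step.D ∉ π := List.count_eq_zero.1 hc
      obtain ⟨k, hk⟩ := even_colVal hDπ x
      obtain ⟨m, hm⟩ := even_colVal hD x
      have h1 := hL.2.2 x
      have h2 := colVal_le_cutPeaks ν x
      omega
    · rintro ⟨hS, hc⟩
      exact ⟨small_is_large hS, hc⟩
  · rw [if_neg (by omega)]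
    set L := {π : List Step // IsLargeSchroder ν π ∧ π.count Step.D = i} with hL
    set X := {π : L // IsSmallSchroder ν π.1} with hX
    set Y := {π : L // ¬ IsSmallSchroder ν π.1} with hY
    have hcard : Nat.card L = Nat.card X + Nat.card Y := by
      rw [← Nat.card_sum]
      exact Nat.card_congr (Equiv.sumCompl _).symm
    have hcardX : Nat.card X
        = Nat.card {π : List Step // IsSmallSchroder ν π ∧ π.count Step.D = i} := by
      apply Nat.card_congr
      refine (Equiv.subtypeSubtypeEquivSubtypeInter _ _).trans
        (Equiv.subtypeEquivRight ?_)
      intro π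
      constructor
      · rintro ⟨⟨-, hc⟩, hs⟩
        exact ⟨hs, hc⟩
      · rintro ⟨hs, hc⟩
        exact ⟨⟨small_is_large hs, hc⟩, hs⟩
    have hcardY : Nat.card Y
        = Nat.card {π : List Step // IsSmallSchroder ν π ∧ π.count Step.D = i - 1} := by
      symm
      apply Nat.card_congr
      have hmk : ∀ σ : {π : List Step // IsSmallSchroder ν π ∧ π.count Step.D = i - 1},
          ∃ π : List Step, Rel ν σ.1 π ∧ (IsLargeSchroder ν π ∧ π.count Step.D = i) ∧
            ¬ IsSmallSchroder ν π := by
        rintro ⟨σ, hσs, hσc⟩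
        obtain ⟨π, hrel, hlarge, hcnt⟩ := exists_rel_of_small hD he h0 hlast hσs
        refine ⟨π, hrel, ⟨hlarge, by omega⟩, ?_⟩
        rintro ⟨-, -, hW⟩
        obtain ⟨μ₁, μ₂, -, -, -, -, c5, -⟩ := hrel
        exact absurd (hW (eLen μ₁)) (by omega)
      refine Equiv.ofBijective
        (fun σ => (⟨⟨(hmk σ).choose, (hmk σ).choose_spec.2.1⟩,
          (hmk σ).choose_spec.2.2⟩ : Y)) ⟨?_, ?_⟩
      · intro σ σ' hff
        have h1 := (hmk σ).choose_spec.1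
        have h2 := (hmk σ').choose_spec.1
        have : (hmk σ).choose = (hmk σ').choose := by
          have := congrArg (fun y : Y => y.1.1) hff
          simpa using this
        rw [this] at h1
        exact Subtype.ext (rel_unique_left h1 h2)
      · rintro ⟨⟨π, hπL, hπc⟩, hπns⟩
        obtain ⟨σ, hrel, hσs, hcnt⟩ :=
          exists_rel_of_large hD he h0 hπL (not_weaklyAbove_of_not_small hπL hπns)
        refine ⟨⟨σ, hσs, by omega⟩, ?_⟩
        have h1 := (hmk ⟨σ, hσs, by omega⟩).choose_spec.1
        have : (hmk ⟨σ, hσs, by omega⟩).choose = π := rel_unique_right h1 hrel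
        apply Subtype.ext
        apply Subtype.ext
        simpa using this
    rw [hcard, hcardX, hcardY]

end Sch9
namespace Sch9

lemma colVal_last (w : List Step) : colVal (w ++ [Step.E]) (eLen w) = 2 * nLen w := by
  rw [colVal_append_le _ le_rfl]; simp

section NuAB

variable {a b : ℕ} (ha : 0 < a) (hb : 0 < b)

lemma nuAB_noD : Step.D ∉ nuAB a b := by
  intro h
  rw [nuAB] at h
  simp only [List.mem_flatMap, List.mem_append, List.mem_replicate,
    List.mem_singleton] at h
  obtain ⟨x, -, h | h⟩ := h
  · exact Step.noConfusion h.2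
  · exact Step.noConfusion h

lemma eLen_flatMap (g : ℕ → ℕ) : ∀ n : ℕ,
    eLen ((List.range n).flatMap (fun x => List.replicate (g x) Step.N ++ [Step.E])) = n := by
  intro n
  induction n with
  | zero => simp [eLen]
  | succ m ih =>
    rw [List.range_succ, List.flatMap_append, List.flatMap_singleton]
    simp only [eLen_append, ih]
    simp [eLen, List.count_replicate]

lemma eLen_nuAB : eLen (nuAB a b) = b := by
  rw [nuAB]; exact eLen_flatMap _ b

include hb in
lemma nLen_nuAB : nLen (nuAB a b) = a := by
  have hmono : ∀ n : ℕ, (n*a + b - 1)/b ≤ ((n+1)*a + b - 1)/b := by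
    intro n
    apply Nat.div_le_div_right
    have : n * a ≤ (n+1) * a := Nat.mul_le_mul_right a (Nat.le_succ n)
    omega
  have key : ∀ n : ℕ, nLen ((List.range n).flatMap (fun x =>
      List.replicate (((x+1)*a + b - 1)/b - (x*a + b - 1)/b) Step.N ++ [Step.E]))
      = (n*a + b - 1)/b - (b-1)/b := by
    intro n
    induction n with
    | zero => simp [nLen]
    | succ m ih =>
      rw [List.range_succ, List.flatMap_append]
      simp only [nLen_append, ih]
      have h1 := hmono m
      have h2 : (b - 1)/b ≤ (m*a + b - 1)/b := by
        apply Nat.div_le_div_right; omega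
      have h3 : nLen (List.replicate ((((m+1))*a + b - 1)/b - (m*a + b - 1)/b) Step.N
          ++ [Step.E]) = ((m+1)*a + b - 1)/b - (m*a + b - 1)/b := by
        simp [nLen, List.count_replicate]
      rw [List.flatMap_singleton, h3]
      omega
  rw [nuAB, key b]
  have hz : (b - 1)/b = 0 := Nat.div_eq_of_lt (by omega)
  have : b * a + b - 1 = b * a + (b - 1) := by omega
  rw [hz, Nat.sub_zero, this, Nat.mul_add_div hb, hz, Nat.add_zero]

lemma two_le_colVal_replicate (k : ℕ) (hk : 1 ≤ k) (rest : List Step) :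
    2 ≤ colVal (List.replicate k Step.N ++ rest) 0 := by
  have h1 : eLen (List.replicate k Step.N) = 0 := by
    simp [eLen, List.count_replicate]
  have h2 : nLen (List.replicate k Step.N) = k := by
    simp [nLen, List.count_replicate]
  rw [colVal_append_le rest (by rw [h1]), h1, h2]
  omega

include ha hb in
lemma colVal_nuAB_zero : 2 ≤ colVal (nuAB a b) 0 := by
  obtain ⟨n, rfl⟩ : ∃ n, b = n + 1 := ⟨b - 1, by omega⟩
  rw [nuAB, List.range_succ_eq_map]
  simp only [List.flatMap_cons]
  rw [List.append_assoc]
  apply two_le_colVal_replicate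
  have h4 : (0*(a:ℕ) + (n+1) - 1)/(n+1) = 0 := Nat.div_eq_of_lt (by omega)
  have h5 : 1 ≤ ((0+1)*a + (n+1) - 1)/(n+1) := by
    rw [Nat.le_div_iff_mul_le (by omega)]
    omega
  omega

include hb in
lemma colVal_nuAB_last :
    colVal (nuAB a b) (eLen (nuAB a b) - 1) = 2 * nLen (nuAB a b) := by
  obtain ⟨n, rfl⟩ : ∃ n, b = n + 1 := ⟨b - 1, by omega⟩
  obtain ⟨w, hw⟩ : ∃ w, nuAB a (n+1) = w ++ [Step.E] := by
    refine ⟨(List.range n).flatMap (fun x =>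
      List.replicate (((x+1)*a + (n+1) - 1)/(n+1) - (x*a + (n+1) - 1)/(n+1)) Step.N
        ++ [Step.E]) ++ List.replicate (((n+1)*a + (n+1) - 1)/(n+1)
          - (n*a + (n+1) - 1)/(n+1)) Step.N, ?_⟩
    rw [nuAB, List.range_succ, List.flatMap_append, List.flatMap_singleton,
      List.append_assoc]
  rw [hw]
  have h1 : eLen (w ++ [Step.E]) - 1 = eLen w := by simp
  have h2 : nLen (w ++ [Step.E]) = nLen w := by simp
  rw [h1, h2, colVal_last]

end NuAB

end Sch9
/-- For coprime positive `a, b` and `0 ≤ i ≤ a`,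
`Sch(a,b,i) = sch(a,b,i) + sch(a,b,i−1)`, with `sch(a,b,−1) = 0`. -/
theorem largeCount_eq_smallCount_add (a b i : ℕ) (ha : 0 < a) (hb : 0 < b)
    (hco : Nat.Coprime a b) (hi : i ≤ a) :
    largeCount a b i
      = smallCount a b i + (if i = 0 then 0 else smallCount a b (i - 1)) := by
  have he : 0 < eLen (nuAB a b) := by rw [Sch9.eLen_nuAB]; exact hb
  simpa only [largeCount, smallCount] using
    Sch9.count_eq (Sch9.nuAB_noD (a := a) (b := b)) he
      (Sch9.colVal_nuAB_zero ha hb) (Sch9.colVal_nuAB_last hb) i
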